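/- arXiv:1406.7107 — 4 statements merged into one kernel-verified Lean document; each statement's English description precedes it below -/
import Mathlib

section
/- In any sequence of moves transforming an initial lay-out into a target lay-out (all stacks non-increasing from the bottom), every container that is wrongly placed in the initial lay-out must be moved at least once. Hence the number of wrongly placed containers is a lower bound on the number of moves. -/
/-- A single move in a bay with `m` stacks of maximum height `h`: the move
`(src, dst, c)` picks up the top container `c` of stack `src` (stacks are
listed bottom to top) and places it on top of stack `dst`, whose height must
be below `h`; all other stacks are unchanged. -/
def IsMove {C : Type} (m h : ℕ) (L L' : Fin m → List C)
    (mv : Fin m × Fin m × C) : Prop :=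
  mv.1 ≠ mv.2.1 ∧ (L mv.2.1).length < h ∧
    L mv.1 = L' mv.1 ++ [mv.2.2] ∧ L' mv.2.1 = L mv.2.1 ++ [mv.2.2] ∧
    ∀ s, s ≠ mv.1 → s ≠ mv.2.1 → L' s = L s

/-- `Plays m h L ms L'` : the sequence of moves `ms` transforms lay-out `L`
into lay-out `L'`. -/
inductive Plays {C : Type} (m h : ℕ) :
    (Fin m → List C) → List (Fin m × Fin m × C) → (Fin m → List C) → Prop
  | nil (L : Fin m → List C) : Plays m h L [] L
  | cons {L L' L'' : Fin m → List C} {mv : Fin m × Fin m × C}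
      {ms : List (Fin m × Fin m × C)} :
      IsMove m h L L' mv → Plays m h L' ms L'' → Plays m h L (mv :: ms) L''

/-- `Wrong x p` : the container at (0-indexed) position `p` of a stack with
priorities `x 0, x 1, ...` (bottom to top) is wrongly placed: some container
strictly below it has strictly smaller priority, or some container strictly
below it is itself wrongly placed. -/
inductive Wrong (x : ℕ → ℕ) : ℕ → Prop
  | base {p q : ℕ} : q < p → x q < x p → Wrong x p
  | above {p q : ℕ} : q < p → Wrong x q → Wrong x p

/-- The container at position `p` (0-indexed from the bottom) of the stack `X`
is wrongly placed, with priorities given by `pr`. -/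
def WrongIn {C : Type} (pr : C → ℕ) (X : List C) (p : ℕ) : Prop :=
  p < X.length ∧ Wrong (fun q => (X.map pr).getD q 0) p

/-- The number of wrongly placed containers in the lay-out `L`. -/
noncomputable def WCount {C : Type} {m : ℕ} (pr : C → ℕ)
    (L : Fin m → List C) : ℕ :=
  ∑ s : Fin m, Nat.card {p : ℕ // WrongIn pr (L s) p}

lemma wrong_iff (x : ℕ → ℕ) (p : ℕ) : Wrong x p ↔ ∃ i j, i < j ∧ j ≤ p ∧ x i < x j := by
  constructor
  · intro hw
    induction hw with
    | base hq hx => exact ⟨_, _, hq, le_refl _, hx⟩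
    | above hq _ ih =>
      obtain ⟨i, j, hij, hjp, hx⟩ := ih
      exact ⟨i, j, hij, hjp.trans hq.le, hx⟩
  · rintro ⟨i, j, hij, hjp, hx⟩
    rcases eq_or_lt_of_le hjp with rfl | hjp
    · exact Wrong.base hij hx
    · exact Wrong.above hjp (Wrong.base hij hx)

lemma prefix_stable {C : Type} {m h : ℕ} {L Lf : Fin m → List C}
    {ms : List (Fin m × Fin m × C)} (hplay : Plays m h L ms Lf)
    (s : Fin m) (p : ℕ) (hp : p < (L s).length)
    (hc : (L s)[p] ∉ ms.map (fun mv => mv.2.2)) :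
    ∃ hp' : p < (Lf s).length, (Lf s).take (p+1) = (L s).take (p+1) := by
  induction hplay with
  | nil L => exact ⟨hp, rfl⟩
  | @cons L L' L'' mv ms hmv _ ih =>
    simp only [List.map_cons, List.mem_cons, not_or] at hc
    obtain ⟨hc1, hc2⟩ := hc
    obtain ⟨hne, _, hsrc, hdst, hoth⟩ := hmv
    have key : ∃ hp' : p < (L' s).length, (L' s).take (p+1) = (L s).take (p+1) := by
      by_cases h1 : s = mv.1
      · have hsrc' : L s = L' s ++ [mv.2.2] := h1 ▸ hsrc
        have hlen : (L s).length = (L' s).length + 1 := by rw [hsrc']; simp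
        have hplt : p < (L' s).length := by
          rcases lt_or_eq_of_le (Nat.lt_succ_iff.mp (hlen ▸ hp)) with h' | h'
          · exact h'
          · exfalso; apply hc1
            have : (L s)[p] = mv.2.2 := by
              simp only [hsrc']
              rw [List.getElem_append_right (by omega)]
              simp [h', hlen, hsrc']
            exact this
        refine ⟨hplt, ?_⟩
        rw [hsrc', List.take_append_of_le_length hplt]
      · by_cases h2 : s = mv.2.1
        · have hdst' : L' s = L s ++ [mv.2.2] := h2 ▸ hdst
          refine ⟨by rw [hdst']; simp; omega, ?_⟩
          rw [hdst', List.take_append_of_le_length hp]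
        · rw [hoth s h1 h2]; exact ⟨hp, rfl⟩
    obtain ⟨hp', htake⟩ := key
    have hgeteq : (L' s)[p] = (L s)[p] := by
      have h1 : ((L' s).take (p+1))[p]'(by rw [List.length_take]; omega) = (L' s)[p] :=
        List.getElem_take
      have h2 : ((L s).take (p+1))[p]'(by rw [List.length_take]; omega) = (L s)[p] :=
        List.getElem_take
      rw [← h1, ← h2]
      exact List.getElem_of_eq htake _
    obtain ⟨hpf, htakef⟩ := ih hp' (by rw [hgeteq]; exact hc2)
    exact ⟨hpf, htakef.trans htake⟩

lemma sorted_no_wrong {C : Type} (pr : C → ℕ) (X : List C)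
    (hs : X.Pairwise (fun a b => pr b ≤ pr a)) (p : ℕ) : ¬ WrongIn pr X p := by
  rintro ⟨hp, hw⟩
  rw [wrong_iff] at hw
  obtain ⟨i, j, hij, hjp, hx⟩ := hw
  have hj : j < X.length := lt_of_le_of_lt hjp hp
  have hi : i < X.length := lt_trans hij hj
  have := hs.rel_get_of_lt (a := ⟨i, hi⟩) (b := ⟨j, hj⟩) hij
  simp only [List.get_eq_getElem] at this
  rw [List.getD_eq_getElem _ _ (by simpa using hi),
    List.getD_eq_getElem _ _ (by simpa using hj)] at hx
  simp only [List.getElem_map] at hx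
  omega

lemma get_inj {C : Type} {m : ℕ} {L : Fin m → List C}
    (hnodup : (List.ofFn L).flatten.Nodup) {s s' : Fin m} {p p' : ℕ}
    (hp : p < (L s).length) (hp' : p' < (L s').length)
    (heq : (L s)[p] = (L s')[p']) : s = s' ∧ p = p' := by
  rw [List.nodup_flatten] at hnodup
  obtain ⟨hnd, hdisj⟩ := hnodup
  rw [List.pairwise_ofFn] at hdisj
  by_cases hss : s = s'
  · subst hss
    refine ⟨rfl, ?_⟩
    have := hnd (L s) (by simp [List.mem_ofFn])
    exact (this.getElem_inj_iff).mp heq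
  · exfalso
    rcases lt_or_gt_of_ne hss with hlt | hlt
    · exact (hdisj hlt) (List.getElem_mem hp) (heq ▸ List.getElem_mem hp')
    · exact (hdisj hlt) (List.getElem_mem hp') (heq ▸ List.getElem_mem hp)

/-- In any sequence of moves transforming an initial lay-out (with pairwise
distinct containers) into a target lay-out (all stacks non-increasing in
priority from the bottom), every container wrongly placed in the initial
lay-out is moved at least once; hence the number of wrongly placed containers
is a lower bound on the number of moves. -/
theorem stmt7 {C : Type} [DecidableEq C] (m h : ℕ) (pr : C → ℕ)
    (L0 Lf : Fin m → List C) (ms : List (Fin m × Fin m × C))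
    (hplay : Plays m h L0 ms Lf)
    (htarget : ∀ s, (Lf s).Pairwise (fun a b => pr b ≤ pr a))
    (hnodup : (List.ofFn L0).flatten.Nodup) :
    (∀ s : Fin m, ∀ p : ℕ, WrongIn pr (L0 s) p → ∀ hp : p < (L0 s).length,
        (L0 s).get ⟨p, hp⟩ ∈ ms.map (fun mv => mv.2.2)) ∧
      WCount pr L0 ≤ ms.length := by
  have main : ∀ s : Fin m, ∀ p : ℕ, WrongIn pr (L0 s) p → ∀ hp : p < (L0 s).length,
      (L0 s).get ⟨p, hp⟩ ∈ ms.map (fun mv => mv.2.2) := by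
    intro s p hw hp
    by_contra hc
    obtain ⟨hpf, htake⟩ := prefix_stable hplay s p hp hc
    apply sorted_no_wrong pr (Lf s) (htarget s) p
    refine ⟨hpf, ?_⟩
    obtain ⟨_, hwr⟩ := hw
    rw [wrong_iff] at hwr ⊢
    obtain ⟨i, j, hij, hjp, hx⟩ := hwr
    refine ⟨i, j, hij, hjp, ?_⟩
    have hagree : ∀ q, q ≤ p → ((Lf s).map pr).getD q 0 = ((L0 s).map pr).getD q 0 := by
      intro q hq
      have hq0 : q < (L0 s).length := lt_of_le_of_lt hq hp
      have hqf : q < (Lf s).length := lt_of_le_of_lt hq hpf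
      rw [List.getD_eq_getElem _ _ (by simpa using hqf),
        List.getD_eq_getElem _ _ (by simpa using hq0)]
      simp only [List.getElem_map]
      congr 1
      have h1 : ((Lf s).take (p+1))[q]'(by rw [List.length_take]; omega) = (Lf s)[q] :=
        List.getElem_take
      have h2 : ((L0 s).take (p+1))[q]'(by rw [List.length_take]; omega) = (L0 s)[q] :=
        List.getElem_take
      rw [← h1, ← h2]
      exact List.getElem_of_eq htake _
    rw [hagree i (le_of_lt (lt_of_lt_of_le hij hjp)), hagree j hjp]
    exact hx
  refine ⟨main, ?_⟩
  -- counting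
  classical
  set T : Finset C := (ms.map (fun mv => mv.2.2)).toFinset with hT
  have hfin : ∀ s : Fin m, Finite {p : ℕ // WrongIn pr (L0 s) p} := by
    intro s
    apply Finite.of_injective (fun x => (⟨x.1, x.2.1⟩ : Fin (L0 s).length))
    rintro ⟨a, ha⟩ ⟨b, hb⟩ hab
    simpa using congrArg Fin.val hab
  have := fun s => Fintype.ofFinite {p : ℕ // WrongIn pr (L0 s) p}
  letI : ∀ s : Fin m, Fintype {p : ℕ // WrongIn pr (L0 s) p} := this
  have hcard : WCount pr L0 = Fintype.card (Σ s : Fin m, {p : ℕ // WrongIn pr (L0 s) p}) := by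
    rw [Fintype.card_sigma, WCount]
    congr 1
    ext s
    rw [Nat.card_eq_fintype_card]
  have hinj : Function.Injective
      (fun x : Σ s : Fin m, {p : ℕ // WrongIn pr (L0 s) p} =>
        (⟨(L0 x.1)[x.2.1]'x.2.2.1, by
          simpa [hT, List.mem_toFinset] using main x.1 x.2.1 x.2.2 x.2.2.1⟩ : T)) := by
    rintro ⟨s, p, hp⟩ ⟨s', p', hp'⟩ heq
    simp only [Subtype.mk.injEq] at heq
    obtain ⟨h1, h2⟩ := get_inj hnodup hp.1 hp'.1 heq
    subst h1
    simp [h2]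
  calc WCount pr L0 = Fintype.card (Σ s : Fin m, {p : ℕ // WrongIn pr (L0 s) p}) := hcard
    _ ≤ Fintype.card T := Fintype.card_le_of_injective _ hinj
    _ = T.card := Fintype.card_coe T
    _ ≤ (ms.map (fun mv => mv.2.2)).length := List.toFinset_card_le _
    _ = ms.length := List.length_map _
end

section
/- Conversely to the previous direction: given a partition P_1,...,P_k of [n] into independent sets of the permutation graph of π with |P_j| ≤ m for all j, the move sequence that pops containers π(n),...,π(1) in that order from the source stack and places container π(i) onto destination stack j with i ∈ P_j is feasible (no destination stack exceeds m containers) and results in every destination stack being sorted in strictly decreasing order from the bottom. -/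
/-- The permutation graph of a permutation `π` of `Fin n`. -/
def permGraph (n : ℕ) (π : Equiv.Perm (Fin n)) : SimpleGraph (Fin n) where
  Adj i j := (i < j ∧ π j < π i) ∨ (j < i ∧ π i < π j)
  symm := by constructor; intro i j h; exact h.symm
  loopless := by constructor; intro i h; rcases h with ⟨h, _⟩ | ⟨h, _⟩ <;> exact lt_irrefl _ h

/-- The content (bottom to top, as priorities) of destination stack `j` after the
containers `π 1, ..., π n` (stacked bottom to top in the source stack) have been
popped in order `π n, ..., π 1` and container `π i` has been placed on stack `σ i`. -/
def destStack (n k : ℕ) (π : Equiv.Perm (Fin n)) (σ : Fin n → Fin k) (j : Fin k) :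
    List ℕ :=
  ((List.finRange n).reverse.filter (fun i => σ i = j)).map (fun i => (π i : ℕ))

/-- Conversely: given a partition of `[n]` into independent sets of the permutation
graph of `π` (encoded by the assignment `σ` of containers to stacks), each of size
at most `m`, popping the containers in the order `π n, ..., π 1` and placing `π i`
onto stack `σ i` is feasible (no destination stack receives more than `m`
containers) and leaves every destination stack sorted strictly decreasingly from
the bottom. -/
theorem stmt10 (n k m : ℕ) (π : Equiv.Perm (Fin n)) (σ : Fin n → Fin k)
    (hindep : ∀ j : Fin k, ∀ u ∈ Finset.univ.filter (fun i' => σ i' = j),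
      ∀ v ∈ Finset.univ.filter (fun i' => σ i' = j), ¬ (permGraph n π).Adj u v)
    (hcard : ∀ j : Fin k, (Finset.univ.filter (fun i' => σ i' = j)).card ≤ m) :
    ∀ j : Fin k, (destStack n k π σ j).length ≤ m ∧
      (destStack n k π σ j).Pairwise (· > ·) := by
  intro j
  set L := (List.finRange n).reverse.filter (fun i => σ i = j) with hL
  have hnodup : L.Nodup :=
    (((List.nodup_reverse).mpr (List.nodup_finRange n)).filter _)
  constructor
  · have h1 : L.length = L.toFinset.card := (List.toFinset_card_of_nodup hnodup).symm
    have h2 : L.toFinset ⊆ Finset.univ.filter (fun i' => σ i' = j) := by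
      intro x hx
      simp only [List.mem_toFinset, hL, List.mem_filter, decide_eq_true_eq] at hx
      simp [hx.2]
    calc (destStack n k π σ j).length = L.length := by simp [destStack, hL]
      _ = L.toFinset.card := h1
      _ ≤ _ := Finset.card_le_card h2
      _ ≤ m := hcard j
  · unfold destStack
    rw [List.pairwise_map]
    have hsub : L.Pairwise (· > ·) :=
      (List.pairwise_reverse.mpr (List.pairwise_lt_finRange n)).sublist List.filter_sublist
    refine hsub.imp_of_mem ?_
    intro a b ha hb hab
    have hσa : σ a = j := by
      have := List.of_mem_filter ha; simpa using this
    have hσb : σ b = j := by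
      have := List.of_mem_filter hb; simpa using this
    have hne : π b ≠ π a := fun h => absurd (π.injective h) (ne_of_lt hab)
    have hadj := hindep j b (by simp [hσb]) a (by simp [hσa])
    simp only [permGraph] at hadj
    have h1 : ¬ (π a < π b) := fun hlt => hadj (Or.inl ⟨hab, hlt⟩)
    have h2 : π b < π a := lt_of_le_of_ne (not_lt.mp h1) hne
    exact h2
end

section
/- Combining the two directions: the Mutual Exclusion Scheduling instance (π, k, m) has a solution (a partition of [n] into k independent sets of the permutation graph of π, each of size at most m) if and only if the containers π(1),...,π(n) stacked bottom-to-top in a single stack can be distributed, popping from the top and each container moved exactly once, onto k stacks of capacity m so that every resulting stack is sorted non-increasingly from the bottom. -/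
lemma card_eq_aux (n : ℕ) (p : Fin n → Prop) [DecidablePred p] :
    (Finset.univ.filter p).card = (((List.finRange n).reverse).filter (fun i => decide (p i))).length := by
  rw [List.filter_reverse, List.length_reverse,
    ← List.toFinset_card_of_nodup ((List.nodup_finRange n).filter _),
    List.toFinset_filter, List.toFinset_finRange]
  simp

lemma pairwise_of_gt_aux {α : Type*} [LinearOrder α] {Q : α → α → Prop} :
    ∀ {l : List α}, l.Pairwise (· > ·) → l.Pairwise Q →
      ∀ a ∈ l, ∀ b ∈ l, b < a → Q a b := by
  intro l
  induction l with
  | nil => intro _ _ a ha; simp at ha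
  | cons x t ih =>
    intro hgt hQ a ha b hb hba
    rcases List.mem_cons.1 ha with rfl | ha' <;> rcases List.mem_cons.1 hb with rfl | hb'
    · exact absurd hba (lt_irrefl _)
    · exact (List.pairwise_cons.1 hQ).1 b hb'
    · exact absurd (hba.trans ((List.pairwise_cons.1 hgt).1 a ha')) (lt_irrefl _)
    · exact ih (List.pairwise_cons.1 hgt).2 (List.pairwise_cons.1 hQ).2 a ha' b hb' hba

lemma sorted_iff_aux (n k : ℕ) (π : Equiv.Perm (Fin n)) (σ : Fin n → Fin k) (j : Fin k) :
    (destStack n k π σ j).Pairwise (· ≥ ·) ↔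
      ∀ a b : Fin n, σ a = j → σ b = j → b < a → (π b : ℕ) ≤ (π a : ℕ) := by
  have hgt : (((List.finRange n).reverse).filter (fun i => decide (σ i = j))).Pairwise (· > ·) :=
    (List.pairwise_reverse.2 ((List.pairwise_lt_finRange n).imp fun h => h)).filter _
  constructor
  · intro hs a b ha hb hba
    have hmem : ∀ c : Fin n, σ c = j →
        c ∈ ((List.finRange n).reverse).filter (fun i => decide (σ i = j)) := by
      intro c hc
      simp [List.mem_filter, hc]
    have hp : (((List.finRange n).reverse).filter (fun i => decide (σ i = j))).Pairwise
        (fun u v => (π v : ℕ) ≤ (π u : ℕ)) := by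
      have := hs
      unfold destStack at this
      rw [List.pairwise_map] at this
      exact this
    exact pairwise_of_gt_aux hgt hp a (hmem a ha) b (hmem b hb) hba
  · intro H
    unfold destStack
    rw [List.pairwise_map]
    refine hgt.imp_of_mem ?_
    intro a b ha hb hab
    have ha' := (List.mem_filter.1 ha).2
    have hb' := (List.mem_filter.1 hb).2
    simp only [decide_eq_true_eq] at ha' hb'
    exact H a b ha' hb' hab

/-- The Mutual Exclusion Scheduling instance `(π, k, m)` has a solution — a
partition of `[n]` into `k` independent sets of the permutation graph of `π`, each
of size at most `m` — iff the containers `π 1, ..., π n` stacked bottom to top in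
a single source stack can be distributed (popping from the top, each container
moved exactly once) over `k` destination stacks of capacity `m` so that every
resulting stack is sorted non-increasingly from the bottom. -/
theorem stmt11 (n k m : ℕ) (π : Equiv.Perm (Fin n)) :
    (∃ σ : Fin n → Fin k,
      (∀ j : Fin k, ∀ u ∈ Finset.univ.filter (fun i' => σ i' = j),
        ∀ v ∈ Finset.univ.filter (fun i' => σ i' = j), ¬ (permGraph n π).Adj u v) ∧
      (∀ j : Fin k, (Finset.univ.filter (fun i' => σ i' = j)).card ≤ m)) ↔
    (∃ σ : Fin n → Fin k, ∀ j : Fin k,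
      (destStack n k π σ j).length ≤ m ∧
        (destStack n k π σ j).Pairwise (· ≥ ·)) := by
  have hlen : ∀ (σ : Fin n → Fin k) (j : Fin k),
      (destStack n k π σ j).length = (Finset.univ.filter (fun i' => σ i' = j)).card := by
    intro σ j
    rw [card_eq_aux n (fun i' => σ i' = j)]
    simp [destStack]
  constructor
  · rintro ⟨σ, hind, hcard⟩
    refine ⟨σ, fun j => ⟨by rw [hlen]; exact hcard j, ?_⟩⟩
    rw [sorted_iff_aux]
    intro a b ha hb hba
    have := hind j a (by simp [ha]) b (by simp [hb])
    rw [permGraph] at this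
    simp only at this
    rw [not_or] at this
    have h2 := not_and.1 this.2 hba
    exact Fin.le_iff_val_le_val.1 (not_lt.1 h2)
  · rintro ⟨σ, h⟩
    refine ⟨σ, fun j u hu v hv hadj => ?_, fun j => by rw [← hlen]; exact (h j).1⟩
    simp only [Finset.mem_filter] at hu hv
    have hs := (sorted_iff_aux n k π σ j).1 (h j).2
    rcases hadj with ⟨huv, hπ⟩ | ⟨hvu, hπ⟩
    · exact absurd (hs v u hv.2 hu.2 huv) (not_le.2 hπ)
    · exact absurd (hs u v hu.2 hv.2 hvu) (not_le.2 hπ)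
end

section
/- In the Configuration Stacking reduction, if container α is directly or transitively below container β in the initial lay-out of a stack, then in any move sequence reaching the target, β must be moved (for the first time) strictly before α is moved; symmetrically, if α is below β in the target lay-out of a stack, then α must be placed at its final position strictly before β is. Consequently, from the stated initial and target lay-outs one derives the chain of inequalities t_{a_i} < t^{(1)}_{π(n−i+1)} < t_{b_i} < t_{c_i} for all i. -/
/-- Container `c` is the container picked up by the `t`-th move of `ms`. -/
def MovedAt {C : Type} {m : ℕ} (ms : List (Fin m × Fin m × C)) (t : ℕ)
    (c : C) : Prop :=
  ∃ h : t < ms.length, (ms.get ⟨t, h⟩).2.2 = c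


/-- `α` is (directly or transitively) below `β` in the stack `X`. -/
def Below {C : Type} (X : List C) (α β : C) : Prop :=
  ∃ p q : Fin X.length, p < q ∧ X.get p = α ∧ X.get q = β


section Aux
variable {C : Type} {m h : ℕ}

def CStot {m : ℕ} (L : Fin m → List C) : Multiset C := ∑ s : Fin m, (L s : Multiset C)

lemma CScoe_flatten (l : List (List C)) :
    ((l.flatten : List C) : Multiset C) = (l.map ((↑·) : List C → Multiset C)).sum := by
  induction l with
  | nil => simp
  | cons a l ih =>
    rw [List.flatten_cons, List.map_cons, List.sum_cons, ← ih, Multiset.coe_add]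

lemma CStot_eq (L : Fin m → List C) : ((List.ofFn L).flatten : Multiset C) = CStot L := by
  rw [CScoe_flatten, List.map_ofFn, List.sum_ofFn]; rfl

lemma CSnodup_tot {L : Fin m → List C} (hnd : (List.ofFn L).flatten.Nodup) :
    (CStot L).Nodup := by
  rw [← CStot_eq]; exact (Multiset.coe_nodup).2 hnd

lemma CSsum_split (f : Fin m → Multiset C) {src dst : Fin m} (hne : src ≠ dst) :
    ∑ s, f s = f src + f dst + ∑ s ∈ (Finset.univ.erase src).erase dst, f s := by
  rw [← Finset.add_sum_erase _ f (Finset.mem_univ src),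
    ← Finset.add_sum_erase _ f (Finset.mem_erase.2 ⟨hne.symm, Finset.mem_univ dst⟩),
    add_assoc]

lemma CStot_move {L L' : Fin m → List C} {mv} (hm : IsMove m h L L' mv) :
    CStot L' = CStot L := by
  obtain ⟨hne, -, hsrc, hdst, hoth⟩ := hm
  unfold CStot
  rw [CSsum_split (fun s => (L' s : Multiset C)) hne,
    CSsum_split (fun s => (L s : Multiset C)) hne]
  have h1 : ((L' mv.1 : Multiset C) + (L' mv.2.1 : Multiset C)) =
      ((L mv.1 : Multiset C) + (L mv.2.1 : Multiset C)) := by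
    rw [hsrc, hdst]
    simp only [← Multiset.coe_add]
    simp [add_comm, add_assoc, add_left_comm]
  rw [h1]
  congr 1
  refine Finset.sum_congr rfl fun s hs => ?_
  simp only [Finset.mem_erase] at hs
  rw [hoth s hs.2.1 hs.1]

lemma CStot_plays {L L' : Fin m → List C} {ms} (hp : Plays m h L ms L') :
    CStot L' = CStot L := by
  induction hp with
  | nil => rfl
  | cons hmv _ ih => rw [ih, CStot_move hmv]

end Aux

section Aux2
variable {C : Type} {m h : ℕ}

lemma CSstack_nodup {L : Fin m → List C} (hnd : (CStot L).Nodup) (s : Fin m) :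
    (L s).Nodup := by
  have hle : (L s : Multiset C) ≤ CStot L :=
    Finset.single_le_sum (f := fun s => (L s : Multiset C))
      (fun i _ => Multiset.zero_le _) (Finset.mem_univ s)
  exact Multiset.coe_nodup.1 (Multiset.nodup_of_le hle hnd)

lemma CScross {L : Fin m → List C} (hnd : (CStot L).Nodup) {s s' : Fin m} {x : C}
    (hss : s ≠ s') (h1 : x ∈ L s) (h2 : x ∈ L s') : False := by
  have hle : (L s : Multiset C) + (L s' : Multiset C) ≤ CStot L := by
    have h3 := Finset.sum_le_sum_of_subset
      (f := fun s => (L s : Multiset C)) (Finset.subset_univ {s, s'})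
    rwa [Finset.sum_pair hss] at h3
  have hd := Multiset.disjoint_of_nodup_add (Multiset.nodup_of_le hle hnd)
  exact Multiset.disjoint_left.1 hd (Multiset.mem_coe.2 h1) (Multiset.mem_coe.2 h2)

lemma CSget_inj {L : Fin m → List C} (hnd : (CStot L).Nodup) {s s' : Fin m} {p q : ℕ}
    (hp : p < (L s).length) (hq : q < (L s').length)
    (heq : (L s)[p] = (L s')[q]) : s = s' ∧ p = q := by
  by_cases hss : s = s'
  · subst hss
    refine ⟨rfl, ?_⟩
    have hn := (List.nodup_iff_injective_getElem).1 (CSstack_nodup hnd s)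
    have h4 := hn (a₁ := ⟨p, hp⟩) (a₂ := ⟨q, hq⟩) heq
    exact congrArg Fin.val h4
  · exact (CScross hnd hss (List.getElem_mem hp) (heq ▸ List.getElem_mem hq)).elim

end Aux2

section Aux3
variable {C : Type} {m h : ℕ}

lemma CSmovedAt_nil {t : ℕ} {x : C} (hmv : MovedAt ([] : List (Fin m × Fin m × C)) t x) :
    False := by
  obtain ⟨ht, -⟩ := hmv; simp at ht

lemma CSmovedAt_cons_zero {mv : Fin m × Fin m × C} {ms : List (Fin m × Fin m × C)} {x : C} :
    MovedAt (mv :: ms) 0 x ↔ mv.2.2 = x := by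
  constructor
  · rintro ⟨ht, hx⟩; exact hx
  · intro hx; exact ⟨by simp, hx⟩

lemma CSmovedAt_cons_succ {mv : Fin m × Fin m × C} {ms : List (Fin m × Fin m × C)}
    {t : ℕ} {x : C} : MovedAt (mv :: ms) (t + 1) x ↔ MovedAt ms t x := by
  constructor
  · rintro ⟨ht, hx⟩
    exact ⟨by simpa using Nat.lt_of_succ_lt_succ ht, by simpa using hx⟩
  · rintro ⟨ht, hx⟩
    exact ⟨by simpa using Nat.succ_lt_succ ht, by simpa using hx⟩

lemma CSmovedAt_drop {ms : List (Fin m × Fin m × C)} {k t : ℕ} {x : C} :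
    MovedAt (ms.drop k) t x ↔ MovedAt ms (k + t) x := by
  constructor
  · rintro ⟨ht, hx⟩
    have hl : k + t < ms.length := by simp at ht; omega
    refine ⟨hl, ?_⟩
    rw [← hx]
    simp [List.get_eq_getElem, List.getElem_drop]
  · rintro ⟨ht, hx⟩
    have hl : t < (ms.drop k).length := by simp; omega
    refine ⟨hl, ?_⟩
    rw [← hx]
    simp [List.get_eq_getElem, List.getElem_drop]

lemma CSbelow_concat {X : List C} {α β c : C} (hb : Below X α β) :
    Below (X ++ [c]) α β := by
  obtain ⟨p, q, hpq, hgp, hgq⟩ := hb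
  refine ⟨⟨p, by simp⟩, ⟨q, by simp⟩, hpq, ?_, ?_⟩
  · show (X ++ [c])[(p : ℕ)] = α
    rw [List.getElem_append_left p.isLt]; exact hgp
  · show (X ++ [c])[(q : ℕ)] = β
    rw [List.getElem_append_left q.isLt]; exact hgq

lemma CSbelow_of_concat {X : List C} {α β c : C} (hb : Below (X ++ [c]) α β)
    (hβ : β ≠ c) : Below X α β := by
  obtain ⟨p, q, hpq, hgp, hgq⟩ := hb
  have hq : (q : ℕ) < X.length := by
    rcases Nat.lt_or_ge (q : ℕ) X.length with hlt | hge
    · exact hlt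
    · exfalso
      have hq' : (q : ℕ) = X.length := by have := q.isLt; simp at this; omega
      apply hβ
      rw [← hgq]
      simp [List.get_eq_getElem, hq']
  have hp : (p : ℕ) < X.length := lt_trans hpq hq
  refine ⟨⟨p, hp⟩, ⟨q, hq⟩, hpq, ?_, ?_⟩
  · rw [← hgp]; simp [List.get_eq_getElem, List.getElem_append_left hp]
  · rw [← hgq]; simp [List.get_eq_getElem, List.getElem_append_left hq]

lemma CSplays_split {L L' : Fin m → List C} {ms : List (Fin m × Fin m × C)}
    (hp : Plays m h L ms L') (k : ℕ) :
    ∃ Lm, Plays m h L (ms.take k) Lm ∧ Plays m h Lm (ms.drop k) L' := by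
  induction hp generalizing k with
  | nil L => exact ⟨L, by simp [Plays.nil], by simp [Plays.nil]⟩
  | cons hmv hrest ih =>
    cases k with
    | zero => exact ⟨_, Plays.nil _, Plays.cons hmv hrest⟩
    | succ k =>
      obtain ⟨Lm, h1, h2⟩ := ih k
      exact ⟨Lm, Plays.cons hmv h1, h2⟩

end Aux3

section Core
variable {C : Type} {m h : ℕ}

lemma CSbelow_first {L L' : Fin m → List C} {ms : List (Fin m × Fin m × C)}
    (hp : Plays m h L ms L') {α β : C} :
    ∀ s : Fin m, (CStot L).Nodup → Below (L s) α β →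
      ∀ tα, MovedAt ms tα α → ∃ tβ, MovedAt ms tβ β ∧ tβ < tα := by
  induction hp with
  | nil L => exact fun s _ _ tα hmv => (CSmovedAt_nil hmv).elim
  | @cons L L' L'' mv ms hmv hrest ih =>
    intro s hnd hb tα htα
    have hnd' : (CStot L').Nodup := by rwa [CStot_move hmv]
    obtain ⟨hne, hh, hsrc, hdst, hoth⟩ := hmv
    obtain ⟨p, q, hpq, hgp, hgq⟩ := hb
    have hbL : Below (L s) α β := ⟨p, q, hpq, hgp, hgq⟩
    cases tα with
    | zero =>
      exfalso
      have hc : mv.2.2 = α := CSmovedAt_cons_zero.1 htα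
      have hlen : (L mv.1).length = (L' mv.1).length + 1 := by rw [hsrc]; simp
      have hget : (L mv.1)[(L' mv.1).length]'(by omega) = α := by
        rw [← hc]; simp [hsrc]
      obtain ⟨hs, hpn⟩ := CSget_inj hnd p.isLt
        (show (L' mv.1).length < (L mv.1).length by omega)
        (by rw [hget]; exact hgp)
      have hq' : (q : ℕ) < (L s).length := q.isLt
      have hsl : (L s).length = (L' mv.1).length + 1 := by rw [hs]; exact hlen
      have hpq' : (p : ℕ) < (q : ℕ) := hpq
      omega
    | succ t =>
      have htα' : MovedAt ms t α := CSmovedAt_cons_succ.1 htα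
      by_cases hcβ : mv.2.2 = β
      · exact ⟨0, CSmovedAt_cons_zero.2 hcβ, Nat.succ_pos t⟩
      · have hb' : Below (L' s) α β := by
          by_cases hs1 : s = mv.1
          · subst hs1
            rw [hsrc] at hbL
            exact CSbelow_of_concat hbL (fun hβc => hcβ hβc.symm)
          · by_cases hs2 : s = mv.2.1
            · subst hs2; rw [hdst]; exact CSbelow_concat hbL
            · rw [hoth s hs1 hs2]; exact hbL
        obtain ⟨tβ, h1, h2⟩ := ih s hnd' hb' t htα'
        exact ⟨tβ + 1, CSmovedAt_cons_succ.2 h1, Nat.succ_lt_succ h2⟩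

lemma CSprefix_stable {L L' : Fin m → List C} {ms : List (Fin m × Fin m × C)}
    (hp : Plays m h L ms L') {β : C} {P : List C} :
    ∀ s : Fin m, P ++ [β] <+: L s → (∀ t, ¬ MovedAt ms t β) →
      P ++ [β] <+: L' s := by
  induction hp with
  | nil L => exact fun s hpre _ => hpre
  | @cons L L' L'' mv ms hmv hrest ih =>
    intro s hpre hβ
    obtain ⟨hne, hh, hsrc, hdst, hoth⟩ := hmv
    have hcβ : mv.2.2 ≠ β := fun hc => hβ 0 (CSmovedAt_cons_zero.2 hc)
    have hβ' : ∀ t, ¬ MovedAt ms t β := fun t ht => hβ (t + 1) (CSmovedAt_cons_succ.2 ht)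
    refine ih s ?_ hβ'
    by_cases hs1 : s = mv.1
    · subst hs1
      rw [hsrc] at hpre
      have hlen : (P ++ [β]).length ≤ (L' mv.1).length + 1 := by
        have := hpre.length_le; simpa using this
      rcases Nat.lt_or_ge (P ++ [β]).length ((L' mv.1).length + 1) with hlt | hge
      · have hle : (P ++ [β]).length ≤ (L' mv.1).length := by omega
        have htake := List.prefix_iff_eq_take.1 hpre
        rw [List.take_append_of_le_length hle] at htake
        exact List.prefix_iff_eq_take.2 htake
      · exfalso
        have hlen2 : (P ++ [β]).length = (L' mv.1 ++ [mv.2.2]).length := by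
          simp only [List.length_append, List.length_singleton] at hlen hge ⊢; omega
        have heq : P ++ [β] = L' mv.1 ++ [mv.2.2] := hpre.eq_of_length hlen2
        have := (List.append_inj' heq (by simp)).2
        simp at this
        exact hcβ this.symm
    · by_cases hs2 : s = mv.2.1
      · subst hs2; rw [hdst]
        exact hpre.trans (List.prefix_append _ _)
      · rw [hoth s hs1 hs2]; exact hpre

end Core

section Uniq
variable {C : Type} [DecidableEq C] {m h : ℕ}

lemma CScount_two {l : List C} {x : C} {u u' : ℕ} (huu : u < u')
    (hu' : u' < l.length) (hxu : l[u]'(by omega) = x) (hxu' : l[u'] = x) :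
    2 ≤ l.count x := by
  have h1 : x ∈ l.take (u + 1) := by
    have hg : (l.take (u + 1))[u]'(by simp; omega) = x := by
      rw [List.getElem_take]; exact hxu
    exact hg ▸ List.getElem_mem _
  have h2 : x ∈ l.drop (u + 1) := by
    have hg : (l.drop (u + 1))[u' - (u + 1)]'(by simp; omega) = x := by
      have : (u + 1) + (u' - (u + 1)) = u' := by omega
      simp only [List.getElem_drop, this]
      exact hxu'
    exact hg ▸ List.getElem_mem _
  have hc1 : 0 < (l.take (u + 1)).count x := List.count_pos_iff.2 h1
  have hc2 : 0 < (l.drop (u + 1)).count x := List.count_pos_iff.2 h2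
  have : l.count x = (l.take (u + 1)).count x + (l.drop (u + 1)).count x := by
    rw [← List.count_append, List.take_append_drop]
  omega

lemma CSmoved_unique {ms : List (Fin m × Fin m × C)} {x : C}
    (hc : (ms.map (fun mv => mv.2.2)).count x = 1) {t t' : ℕ}
    (h1 : MovedAt ms t x) (h2 : MovedAt ms t' x) : t = t' := by
  obtain ⟨ht, hx⟩ := h1
  obtain ⟨ht', hx'⟩ := h2
  have hgt : ∀ u (hu : u < ms.length), (ms.map (fun mv => mv.2.2))[u]'(by simpa) =
      (ms.get ⟨u, hu⟩).2.2 := by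
    intro u hu; simp
  rcases lt_trichotomy t t' with hlt | heq | hgt'
  · exact absurd hc (by
      have := CScount_two hlt (by simpa using ht') ((hgt t ht).trans hx)
        ((hgt t' ht').trans hx')
      omega)
  · exact heq
  · exact absurd hc (by
      have := CScount_two hgt' (by simpa using ht) ((hgt t' ht').trans hx')
        ((hgt t ht).trans hx)
      omega)

end Uniq

section Final
variable {C : Type} {m h : ℕ}

lemma CSfinal_order {L0 Lf : Fin m → List C} {ms : List (Fin m × Fin m × C)}
    (hplay : Plays m h L0 ms Lf) (hnd0 : (CStot L0).Nodup) (hndf : (CStot Lf).Nodup)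
    (s : Fin m) (α β : C) (hb : Below (Lf s) α β) (tα tβ : ℕ)
    (hα : MovedAt ms tα α) (hβ : MovedAt ms tβ β)
    (hβmax : ∀ t, MovedAt ms t β → t ≤ tβ) : tα < tβ := by
  obtain ⟨p, q, hpq, hgp, hgq⟩ := hb
  have hpq' : (p : ℕ) < (q : ℕ) := hpq
  have hαβ : α ≠ β := by
    intro he
    obtain ⟨-, hpqeq⟩ := CSget_inj hndf p.isLt q.isLt
      (show (Lf s)[(p : ℕ)] = (Lf s)[(q : ℕ)] from hgp.trans (he ▸ hgq.symm))
    omega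
  by_contra hnlt
  push_neg at hnlt
  have hne : tβ ≠ tα := by
    intro he; subst he
    obtain ⟨h1, e1⟩ := hα; obtain ⟨h2, e2⟩ := hβ
    exact hαβ (e1 ▸ e2 ▸ rfl)
  have htβα : tβ < tα := lt_of_le_of_ne hnlt hne
  obtain ⟨Lm, hp1, hp2⟩ := CSplays_split hplay tβ
  obtain ⟨hlt, hxβ⟩ := hβ
  have hdrop : ms.drop tβ = ms.get ⟨tβ, hlt⟩ :: ms.drop (tβ + 1) := by
    rw [List.drop_eq_getElem_cons hlt]; rfl
  rw [hdrop] at hp2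
  cases hp2 with
  | @cons _ L2 _ _ _ hmv hrest =>
    set mv := ms.get ⟨tβ, hlt⟩ with hmvdef
    have hndm : (CStot Lm).Nodup := by rw [CStot_plays hp1]; exact hnd0
    have hnd2 : (CStot L2).Nodup := by rw [CStot_move hmv]; exact hndm
    obtain ⟨hne2, hh2, hsrc2, hdst2, hoth2⟩ := hmv
    rw [hxβ] at hdst2
    have hβnot : ∀ t, ¬ MovedAt (ms.drop (tβ + 1)) t β := by
      intro t ht
      have h5 := hβmax _ (CSmovedAt_drop.1 ht)
      omega
    have hpre : Lm mv.2.1 ++ [β] <+: Lf mv.2.1 :=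
      CSprefix_stable hrest mv.2.1 (by rw [← hdst2]) hβnot
    have hβdst : β ∈ Lf mv.2.1 := hpre.subset (by simp)
    have hβs : β ∈ Lf s := by rw [← hgq]; exact List.get_mem _ _
    have hsdst : s = mv.2.1 := by
      by_contra hss
      exact CScross hndf hss hβs hβdst
    subst hsdst
    have hql : (Lm mv.2.1 ++ [β]).length ≤ (Lf mv.2.1).length := hpre.length_le
    have hql' : (Lm mv.2.1).length < (Lf mv.2.1).length := by simp at hql; omega
    have hgPl : (Lf mv.2.1)[(Lm mv.2.1).length]'hql' = β := by
      rw [← hpre.getElem (show (Lm mv.2.1).length < (Lm mv.2.1 ++ [β]).length by simp)]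
      simp
    obtain ⟨-, hqP⟩ := CSget_inj hndf q.isLt hql' (by rw [hgPl]; exact hgq)
    have hpP : (p : ℕ) < (Lm mv.2.1).length := by omega
    have hgα : (Lm mv.2.1 ++ [β])[(p : ℕ)]'(by simp; omega) = α := by
      rw [hpre.getElem (show (p : ℕ) < (Lm mv.2.1 ++ [β]).length by simp; omega)]
      exact hgp
    have hb2 : Below (L2 mv.2.1) α β := by
      rw [hdst2]
      refine ⟨⟨p, by simp; omega⟩, ⟨(Lm mv.2.1).length, by simp⟩, ?_, ?_, ?_⟩
      · show (p : ℕ) < (Lm mv.2.1).length; omega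
      · exact hgα
      · show (Lm mv.2.1 ++ [β])[(Lm mv.2.1).length]'(by simp) = β; simp
    have hαrest : MovedAt (ms.drop (tβ + 1)) (tα - (tβ + 1)) α := by
      rw [CSmovedAt_drop]
      have he : tβ + 1 + (tα - (tβ + 1)) = tα := by omega
      rw [he]; exact hα
    obtain ⟨t', ht', -⟩ := CSbelow_first hrest mv.2.1 hnd2 hb2 _ hαrest
    exact hβnot t' ht'

end Final

/-- For a move sequence `ms` transforming `L0` into `Lf` (containers pairwise
distinct): (1) if `α` is below `β` in the initial lay-out of a stack, then `β`
is moved (for the first time) strictly before `α` is moved; (2) if `α` is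
below `β` in the target lay-out of a stack, then `α` is placed at its final
position (its last move) strictly before `β` is; (3) consequently, for the
Configuration Stacking stacks `s_{1,i}` (initially `[g, d, b, node, a]` bottom
to top) and `s_{3,i-1}` (finally fill containers with `a, b, c` on top, in
that order), one has `t_a < t^{(1)}_{node} < t_b < t_c`. -/
theorem stmt15 {C : Type} [DecidableEq C] (m h : ℕ)
    (L0 Lf : Fin m → List C) (ms : List (Fin m × Fin m × C))
    (hplay : Plays m h L0 ms Lf)
    (hnodup0 : (List.ofFn L0).flatten.Nodup)
    (hnodupf : (List.ofFn Lf).flatten.Nodup) :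
    (∀ s : Fin m, ∀ α β : C, Below (L0 s) α β →
      ∀ tα, MovedAt ms tα α → ∃ tβ, MovedAt ms tβ β ∧ tβ < tα) ∧
    (∀ s : Fin m, ∀ α β : C, Below (Lf s) α β →
      ∀ tα tβ, MovedAt ms tα α → MovedAt ms tβ β →
        (∀ t, MovedAt ms t α → t ≤ tα) → (∀ t, MovedAt ms t β → t ≤ tβ) →
        tα < tβ) ∧
    (∀ (s s' : Fin m) (g d b node a c : C) (F : List C),
      L0 s = [g, d, b, node, a] → Lf s' = F ++ [a, b, c] → c ∉ L0 s →
      (ms.map (fun mv => mv.2.2)).count a = 1 →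
      (ms.map (fun mv => mv.2.2)).count b = 1 →
      (ms.map (fun mv => mv.2.2)).count c = 1 →
      ∀ ta tnode tb tc, MovedAt ms ta a → MovedAt ms tb b → MovedAt ms tc c →
        MovedAt ms tnode node → (∀ t, MovedAt ms t node → tnode ≤ t) →
        ta < tnode ∧ tnode < tb ∧ tb < tc) := by
  have hnd0' := CSnodup_tot hnodup0
  have hndf' := CSnodup_tot hnodupf
  refine ⟨?_, ?_, ?_⟩
  · intro s α β hb tα htα
    exact CSbelow_first hplay s hnd0' hb tα htα
  · intro s α β hb tα tβ hα hβ hαmax hβmax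
    exact CSfinal_order hplay hnd0' hndf' s α β hb tα tβ hα hβ hβmax
  · intro s s' g d b node a c F hL0 hLf hcmem hca hcb hcc ta tnode tb tc hta htb htc htnode htmin
    have hbna : Below (L0 s) node a := by
      rw [hL0]
      exact ⟨⟨3, by norm_num⟩, ⟨4, by norm_num⟩, Fin.mk_lt_mk.2 (by omega), rfl, rfl⟩
    have hbbn : Below (L0 s) b node := by
      rw [hL0]
      exact ⟨⟨2, by norm_num⟩, ⟨3, by norm_num⟩, Fin.mk_lt_mk.2 (by omega), rfl, rfl⟩
    have h1 : ta < tnode := by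
      obtain ⟨t, hta', hlt⟩ := CSbelow_first hplay s hnd0' hbna tnode htnode
      rwa [CSmoved_unique hca hta' hta] at hlt
    have h2 : tnode < tb := by
      obtain ⟨t, htn', hlt⟩ := CSbelow_first hplay s hnd0' hbbn tb htb
      exact lt_of_le_of_lt (htmin t htn') hlt
    have hbc : Below (Lf s') b c := by
      rw [hLf]
      refine ⟨⟨F.length + 1, by simp⟩, ⟨F.length + 2, by simp⟩, ?_, ?_, ?_⟩
      · show F.length + 1 < F.length + 2; omega
      · simp only [List.get_eq_getElem]
        rw [List.getElem_append_right (by omega)]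
        have he : F.length + 1 - F.length = 1 := by omega
        simp [he]
      · simp only [List.get_eq_getElem]
        rw [List.getElem_append_right (by omega)]
        have he : F.length + 2 - F.length = 2 := by omega
        simp [he]
    have h3 : tb < tc := CSfinal_order hplay hnd0' hndf' s' b c hbc tb tc htb htc
        (fun t ht => le_of_eq (CSmoved_unique hcc ht htc))
    exact ⟨h1, h2, h3⟩
end
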